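/- arXiv:0907.5363 — 4 statements merged into one kernel-verified Lean document; each statement's English description precedes it below -/
import Mathlib

section
/- Let (X,d) and (X',d') be compact metric spaces, φ : X → X a continuous map, and h : X → X' a homeomorphism; set ψ = h ∘ φ ∘ h⁻¹ : X' → X'. Then C(ψ) = C(φ), C̲(ψ) = C̲(φ), and C*(ψ) = C*(φ); in particular the three complexity indices are invariants of topological conjugacy and do not depend on the choice of topologically equivalent metrics. -/
open Filter Set Metric
open scoped ENNReal Topology

/-- The dynamical distance of order `n` associated with the map `φ`:
`d_n^φ(x,y) = max_{0 ≤ k ≤ n-1} d(φ^k x, φ^k y)`. -/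
noncomputable def dynDist {X : Type*} [MetricSpace X] (φ : X → X) (n : ℕ) (x y : X) : ℝ :=
  ⨆ k : Fin n, dist (φ^[(k : ℕ)] x) (φ^[(k : ℕ)] y)

/-- The open `(n,ε)`-ball centered at `x` for the dynamical distance `d_n^φ`. -/
def dynBall {X : Type*} [MetricSpace X] (φ : X → X) (n : ℕ) (x : X) (ε : ℝ) : Set X :=
  {y | dynDist φ n x y < ε}

/-- `G_n(Y,ε)`: the minimal number of `(n,ε)`-balls (centers anywhere in `X`)
needed to cover `Y`. -/
noncomputable def coverNum {X : Type*} [MetricSpace X] (φ : X → X) (n : ℕ) (Y : Set X)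
    (ε : ℝ) : ℕ :=
  sInf {m : ℕ | ∃ t : Finset X, t.card = m ∧ Y ⊆ ⋃ x ∈ t, dynBall φ n x ε}

/-- The (upper) complexity index `C(φ,Y) = sup_{ε>0} limsup_n log G_n(Y,ε) / log n`. -/
noncomputable def upperComplexity {X : Type*} [MetricSpace X] (φ : X → X) (Y : Set X) : ℝ≥0∞ :=
  ⨆ (ε : ℝ) (_ : 0 < ε),
    Filter.limsup
      (fun n : ℕ => ENNReal.ofReal (Real.log (coverNum φ n Y ε) / Real.log n)) Filter.atTop

/-- The lower complexity index `C̲(φ,Y) = sup_{ε>0} liminf_n log G_n(Y,ε) / log n`. -/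
noncomputable def lowerComplexity {X : Type*} [MetricSpace X] (φ : X → X) (Y : Set X) : ℝ≥0∞ :=
  ⨆ (ε : ℝ) (_ : 0 < ε),
    Filter.liminf
      (fun n : ℕ => ENNReal.ofReal (Real.log (coverNum φ n Y ε) / Real.log n)) Filter.atTop

/-- The weight `M(C,s) = Σ_i (1/n_i)^s` of a (countable) family of dynamical balls, the
family being encoded as a set of pairs `(center, order)`. -/
noncomputable def coverWeight {X : Type*} [MetricSpace X] (s : ℝ) (S : Set (X × ℕ)) : ℝ≥0∞ :=
  ∑' p : S, ((p : X × ℕ).2 : ℝ≥0∞)⁻¹ ^ s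

/-- A covering of `Y` of order `≥ N` at scale `ε`: a countable family of `(n_i,ε)`-balls
with all `n_i ≥ N` whose union contains `Y`. -/
def IsDynCover {X : Type*} [MetricSpace X] (φ : X → X) (Y : Set X) (ε : ℝ) (N : ℕ)
    (S : Set (X × ℕ)) : Prop :=
  S.Countable ∧ (∀ p ∈ S, N ≤ p.2) ∧ Y ⊆ ⋃ p ∈ S, dynBall φ p.2 p.1 ε

/-- `δ(Y,ε,s,N)`: the infimum of the weights of coverings of `Y` of order `≥ N`. -/
noncomputable def dynDelta {X : Type*} [MetricSpace X] (φ : X → X) (Y : Set X) (ε s : ℝ)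
    (N : ℕ) : ℝ≥0∞ :=
  ⨅ (S : Set (X × ℕ)) (_ : IsDynCover φ Y ε N S), coverWeight s S

/-- `Δ(Y,ε,s) = sup_{N ≥ 1} δ(Y,ε,s,N)`. -/
noncomputable def dynDeltaSup {X : Type*} [MetricSpace X] (φ : X → X) (Y : Set X)
    (ε s : ℝ) : ℝ≥0∞ :=
  ⨆ (N : ℕ) (_ : 1 ≤ N), dynDelta φ Y ε s N

/-- The critical value `s_c(Y,ε) = inf {s ≥ 0 | Δ(Y,ε,s) = 0}`, as an element of `[0,∞]`
(with `inf ∅ = +∞`). -/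
noncomputable def critVal {X : Type*} [MetricSpace X] (φ : X → X) (Y : Set X) (ε : ℝ) : ℝ≥0∞ :=
  sInf {c : ℝ≥0∞ | ∃ s : ℝ, 0 ≤ s ∧ c = ENNReal.ofReal s ∧ dynDeltaSup φ Y ε s = 0}

/-- The weak complexity index `C*(φ,Y) = sup_{ε>0} s_c(Y,ε)`. -/
noncomputable def weakComplexity {X : Type*} [MetricSpace X] (φ : X → X) (Y : Set X) : ℝ≥0∞ :=
  ⨆ (ε : ℝ) (_ : 0 < ε), critVal φ Y ε

section Aux
variable {X X' : Type*} [MetricSpace X] [MetricSpace X']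

lemma dist_le_dynDist (φ : X → X) {n : ℕ} (k : Fin n) (x y : X) :
    dist (φ^[(k : ℕ)] x) (φ^[(k : ℕ)] y) ≤ dynDist φ n x y := by
  unfold dynDist
  exact le_ciSup (f := fun k : Fin n => dist (φ^[(k : ℕ)] x) (φ^[(k : ℕ)] y))
    (Set.Finite.bddAbove (Set.finite_range _)) k

lemma dynDist_le (φ : X → X) {n : ℕ} {x y : X} {c : ℝ} (hc : 0 ≤ c)
    (H : ∀ k : Fin n, dist (φ^[(k : ℕ)] x) (φ^[(k : ℕ)] y) ≤ c) :
    dynDist φ n x y ≤ c := by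
  rcases isEmpty_or_nonempty (Fin n) with hn | hn
  · haveI := hn
    simp only [dynDist, Real.iSup_of_isEmpty]; exact hc
  · exact ciSup_le H

lemma conj_iterate (φ : X → X) (h : X ≃ₜ X') (k : ℕ) (x' : X') :
    (fun x' => h (φ (h.symm x')))^[k] x' = h (φ^[k] (h.symm x')) := by
  induction k with
  | zero => simp
  | succ k ih =>
    rw [Function.iterate_succ_apply', ih, Function.iterate_succ_apply']
    simp

lemma exists_delta [CompactSpace X] (h : X ≃ₜ X') {ε : ℝ} (hε : 0 < ε) :
    ∃ δ > 0, ∀ (φ : X → X) (n : ℕ) (x y : X), dynDist φ n x y < δ →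
      dynDist (fun x' => h (φ (h.symm x'))) n (h x) (h y) < ε := by
  have hu : UniformContinuous h := CompactSpace.uniformContinuous_of_continuous h.continuous
  rw [Metric.uniformContinuous_iff] at hu
  obtain ⟨δ, hδ, hδ'⟩ := hu (ε / 2) (half_pos hε)
  refine ⟨δ, hδ, fun φ n x y hxy => ?_⟩
  have : dynDist (fun x' => h (φ (h.symm x'))) n (h x) (h y) ≤ ε / 2 := by
    apply dynDist_le _ (half_pos hε).le
    intro k
    rw [conj_iterate, conj_iterate]
    simp only [Homeomorph.symm_apply_apply]
    exact (hδ' ((dist_le_dynDist φ k x y).trans_lt hxy)).le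
  exact this.trans_lt (half_lt_self hε)

lemma exists_eta [CompactSpace X] (φ : X → X) (hφ : Continuous φ) (n : ℕ) {δ : ℝ} (hδ : 0 < δ) :
    ∃ η > 0, ∀ x y : X, dist x y < η → ∀ k < n, dist (φ^[k] x) (φ^[k] y) < δ := by
  induction n with
  | zero => exact ⟨1, one_pos, fun x y _ k hk => absurd hk (Nat.not_lt_zero k)⟩
  | succ n ih =>
    obtain ⟨η, hη, hη'⟩ := ih
    have hc : UniformContinuous (φ^[n]) :=
      CompactSpace.uniformContinuous_of_continuous (hφ.iterate n)
    rw [Metric.uniformContinuous_iff] at hc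
    obtain ⟨η', hη'0, hη''⟩ := hc δ hδ
    refine ⟨min η η', lt_min hη hη'0, fun x y hxy k hk => ?_⟩
    rcases Nat.lt_succ_iff_lt_or_eq.mp hk with hk | rfl
    · exact hη' x y (hxy.trans_le (min_le_left _ _)) k hk
    · exact hη'' (hxy.trans_le (min_le_right _ _))

lemma natlog_mono {a b : ℕ} (hab : a ≤ b) : Real.log a ≤ Real.log b := by
  rcases Nat.eq_zero_or_pos a with rfl | ha
  · simp only [Nat.cast_zero, Real.log_zero]
    rcases Nat.eq_zero_or_pos b with rfl | hb
    · simp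
    · exact Real.log_natCast_nonneg b
  · exact Real.log_le_log (by exact_mod_cast ha) (by exact_mod_cast hab)

lemma term_le {a b : ℕ} (hab : a ≤ b) (n : ℕ) :
    ENNReal.ofReal (Real.log a / Real.log n) ≤ ENNReal.ofReal (Real.log b / Real.log n) := by
  apply ENNReal.ofReal_le_ofReal
  have hn : 0 ≤ Real.log n := Real.log_natCast_nonneg n
  exact div_le_div_of_nonneg_right (natlog_mono hab) hn

end Aux

section Aux2
variable {X X' : Type*} [MetricSpace X] [MetricSpace X']

lemma cover_exists [CompactSpace X] (φ : X → X) (hφ : Continuous φ) (n : ℕ) {δ : ℝ}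
    (hδ : 0 < δ) : ∃ t : Finset X, (univ : Set X) ⊆ ⋃ x ∈ t, dynBall φ n x δ := by
  obtain ⟨η, hη, hη'⟩ := exists_eta φ hφ n (half_pos hδ)
  obtain ⟨t, htfin, htcov⟩ := (Metric.totallyBounded_iff.mp (isCompact_univ (X := X)).totallyBounded) η hη
  refine ⟨htfin.toFinset, fun x _ => ?_⟩
  obtain ⟨y, hy, hxy⟩ := Set.mem_iUnion₂.mp (htcov (Set.mem_univ x))
  refine Set.mem_iUnion₂.mpr ⟨y, htfin.mem_toFinset.mpr hy, ?_⟩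
  have : dynDist φ n y x ≤ δ / 2 := by
    apply dynDist_le _ (half_pos hδ).le
    intro k
    exact (hη' y x (by rw [dist_comm]; exact Metric.mem_ball.mp hxy) k k.isLt).le
  exact this.trans_lt (half_lt_self hδ)

lemma coverNum_le [CompactSpace X] [DecidableEq X'] (h : X ≃ₜ X') (φ : X → X) (hφ : Continuous φ)
    {ε δ : ℝ} (hδ : 0 < δ)
    (key : ∀ (n : ℕ) (x y : X), dynDist φ n x y < δ →
      dynDist (fun x' => h (φ (h.symm x'))) n (h x) (h y) < ε) (n : ℕ) :
    coverNum (fun x' => h (φ (h.symm x'))) n univ ε ≤ coverNum φ n univ δ := by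
  have hS : {m : ℕ | ∃ t : Finset X, t.card = m ∧
      (univ : Set X) ⊆ ⋃ x ∈ t, dynBall φ n x δ}.Nonempty := by
    obtain ⟨t, ht⟩ := cover_exists φ hφ n hδ
    exact ⟨t.card, t, rfl, ht⟩
  obtain ⟨t, ht, hcov⟩ := Nat.sInf_mem hS
  have hmem : (t.image h).card ∈ {m : ℕ | ∃ t' : Finset X', t'.card = m ∧
      (univ : Set X') ⊆ ⋃ x ∈ t', dynBall (fun x' => h (φ (h.symm x'))) n x ε} := by
    refine ⟨t.image h, rfl, fun x' _ => ?_⟩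
    obtain ⟨x, hx, hball⟩ := Set.mem_iUnion₂.mp (hcov (Set.mem_univ (h.symm x')))
    refine Set.mem_iUnion₂.mpr ⟨h x, Finset.mem_image_of_mem h hx, ?_⟩
    have := key n x (h.symm x') hball
    rwa [h.apply_symm_apply] at this
  calc coverNum (fun x' => h (φ (h.symm x'))) n univ ε ≤ (t.image h).card := Nat.sInf_le hmem
    _ ≤ t.card := Finset.card_image_le
    _ = coverNum φ n univ δ := ht

end Aux2

section Main
variable {X X' : Type*} [MetricSpace X] [MetricSpace X']

lemma upper_le [CompactSpace X] (h : X ≃ₜ X') (φ : X → X) (hφ : Continuous φ) :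
    upperComplexity (fun x' => h (φ (h.symm x'))) univ ≤ upperComplexity φ univ := by
  classical
  apply iSup₂_le
  intro ε hε
  obtain ⟨δ, hδ, key⟩ := exists_delta h hε
  refine le_trans ?_ (le_iSup₂ (f := fun (δ : ℝ) (_ : 0 < δ) => Filter.limsup
      (fun n : ℕ => ENNReal.ofReal (Real.log (coverNum φ n univ δ) / Real.log n))
      Filter.atTop) δ hδ)
  exact Filter.limsup_le_limsup (Eventually.of_forall fun n =>
    term_le (coverNum_le h φ hφ hδ (key φ) n) n)

lemma lower_le [CompactSpace X] (h : X ≃ₜ X') (φ : X → X) (hφ : Continuous φ) :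
    lowerComplexity (fun x' => h (φ (h.symm x'))) univ ≤ lowerComplexity φ univ := by
  classical
  apply iSup₂_le
  intro ε hε
  obtain ⟨δ, hδ, key⟩ := exists_delta h hε
  refine le_trans ?_ (le_iSup₂ (f := fun (δ : ℝ) (_ : 0 < δ) => Filter.liminf
      (fun n : ℕ => ENNReal.ofReal (Real.log (coverNum φ n univ δ) / Real.log n))
      Filter.atTop) δ hδ)
  exact Filter.liminf_le_liminf (Eventually.of_forall fun n =>
    term_le (coverNum_le h φ hφ hδ (key φ) n) n)

lemma coverWeight_image (h : X ≃ₜ X') (s : ℝ) (S : Set (X × ℕ)) :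
    coverWeight s ((fun p : X × ℕ => (h p.1, p.2)) '' S) = coverWeight s S := by
  unfold coverWeight
  have hinj : Set.InjOn (fun p : X × ℕ => (h p.1, p.2)) S := fun p _ q _ hpq => by
    simp only [Prod.mk.injEq] at hpq
    exact Prod.ext_iff.mpr ⟨h.injective hpq.1, hpq.2⟩
  exact tsum_image (fun p : X' × ℕ => ((p.2 : ℝ≥0∞))⁻¹ ^ s) hinj

lemma dynDelta_le [CompactSpace X] (h : X ≃ₜ X') (φ : X → X) {ε δ : ℝ}
    (key : ∀ (n : ℕ) (x y : X), dynDist φ n x y < δ →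
      dynDist (fun x' => h (φ (h.symm x'))) n (h x) (h y) < ε) (s : ℝ) (N : ℕ) :
    dynDelta (fun x' => h (φ (h.symm x'))) univ ε s N ≤ dynDelta φ univ δ s N := by
  apply le_iInf₂
  intro S hS
  have hcover : IsDynCover (fun x' => h (φ (h.symm x'))) univ ε N
      ((fun p : X × ℕ => (h p.1, p.2)) '' S) := by
    refine ⟨hS.1.image _, ?_, ?_⟩
    · rintro p ⟨q, hq, rfl⟩
      exact hS.2.1 q hq
    · intro x' _
      obtain ⟨p, hp, hball⟩ := Set.mem_iUnion₂.mp (hS.2.2 (Set.mem_univ (h.symm x')))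
      refine Set.mem_iUnion₂.mpr ⟨(h p.1, p.2), ⟨p, hp, rfl⟩, ?_⟩
      have := key p.2 p.1 (h.symm x') hball
      rwa [h.apply_symm_apply] at this
  calc dynDelta (fun x' => h (φ (h.symm x'))) univ ε s N
      ≤ coverWeight s ((fun p : X × ℕ => (h p.1, p.2)) '' S) := iInf₂_le _ hcover
    _ = coverWeight s S := coverWeight_image h s S

lemma weak_le [CompactSpace X] (h : X ≃ₜ X') (φ : X → X) :
    weakComplexity (fun x' => h (φ (h.symm x'))) univ ≤ weakComplexity φ univ := by
  apply iSup₂_le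
  intro ε hε
  obtain ⟨δ, hδ, key⟩ := exists_delta h hε
  refine le_trans ?_ (le_iSup₂ (f := fun (δ : ℝ) (_ : 0 < δ) => critVal φ univ δ) δ hδ)
  apply sInf_le_sInf
  rintro c ⟨s, hs0, rfl, hΔ⟩
  refine ⟨s, hs0, rfl, ?_⟩
  have hle : dynDeltaSup (fun x' => h (φ (h.symm x'))) univ ε s ≤ dynDeltaSup φ univ δ s := by
    apply iSup₂_le
    intro N hN
    exact le_trans (dynDelta_le h φ (key φ) s N)
      (le_iSup₂ (f := fun (N : ℕ) (_ : 1 ≤ N) => dynDelta φ univ δ s N) N hN)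
  exact le_antisymm (hΔ ▸ hle) zero_le

end Main

/-- the complexity indices are invariants of topological conjugacy. -/
theorem complexity_conjugacy_invariant {X X' : Type*}
    [MetricSpace X] [CompactSpace X] [MetricSpace X'] [CompactSpace X']
    (φ : X → X) (hφ : Continuous φ) (h : X ≃ₜ X') :
    upperComplexity (fun x' => h (φ (h.symm x'))) Set.univ = upperComplexity φ Set.univ ∧
    lowerComplexity (fun x' => h (φ (h.symm x'))) Set.univ = lowerComplexity φ Set.univ ∧
    weakComplexity (fun x' => h (φ (h.symm x'))) Set.univ = weakComplexity φ Set.univ := by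
  have hψ : Continuous (fun x' => h (φ (h.symm x'))) :=
    h.continuous.comp (hφ.comp h.symm.continuous)
  have he : (fun x => h.symm ((fun x' => h (φ (h.symm x'))) (h.symm.symm x))) = φ := by
    funext x; simp
  have hu := upper_le h.symm (fun x' => h (φ (h.symm x'))) hψ
  have hl := lower_le h.symm (fun x' => h (φ (h.symm x'))) hψ
  have hw := weak_le h.symm (fun x' => h (φ (h.symm x')))
  rw [he] at hu hl hw
  exact ⟨le_antisymm (upper_le h φ hφ) hu, le_antisymm (lower_le h φ hφ) hl,
    le_antisymm (weak_le h φ) hw⟩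
end

section
/- Let (X,d) be a compact metric space and φ : X → X a continuous map. For any sequence (Y_m)_{m∈ℕ} of subsets of X one has C*(φ, ∪_{m∈ℕ} Y_m) = sup_{m∈ℕ} C*(φ, Y_m) (the σ-union property of the weak complexity index). -/
open Filter Set Metric
open scoped ENNReal Topology

section Aux

variable {X : Type*} [MetricSpace X] {φ : X → X}

lemma isDynCover_mono {Y Z : Set X} (hYZ : Y ⊆ Z) {ε : ℝ} {N : ℕ} {S : Set (X × ℕ)}
    (hS : IsDynCover φ Z ε N S) : IsDynCover φ Y ε N S :=
  ⟨hS.1, hS.2.1, hYZ.trans hS.2.2⟩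

lemma dynDelta_mono {Y Z : Set X} (hYZ : Y ⊆ Z) (ε s : ℝ) (N : ℕ) :
    dynDelta φ Y ε s N ≤ dynDelta φ Z ε s N :=
  le_iInf₂ fun S hS => iInf₂_le S (isDynCover_mono hYZ hS)

lemma dynDeltaSup_mono {Y Z : Set X} (hYZ : Y ⊆ Z) (ε s : ℝ) :
    dynDeltaSup φ Y ε s ≤ dynDeltaSup φ Z ε s :=
  iSup₂_mono fun N _ => dynDelta_mono hYZ ε s N

lemma critVal_mono {Y Z : Set X} (hYZ : Y ⊆ Z) (ε : ℝ) :
    critVal φ Y ε ≤ critVal φ Z ε := by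
  apply sInf_le_sInf
  rintro c ⟨s, hs0, rfl, h0⟩
  exact ⟨s, hs0, rfl, le_antisymm (h0 ▸ dynDeltaSup_mono hYZ ε s) (zero_le)⟩

lemma weakComplexity_mono {Y Z : Set X} (hYZ : Y ⊆ Z) :
    weakComplexity φ Y ≤ weakComplexity φ Z :=
  iSup₂_mono fun ε _ => critVal_mono hYZ ε

lemma coverWeight_anti {s s' : ℝ} (hss' : s' ≤ s) {S : Set (X × ℕ)}
    (hS : ∀ p ∈ S, 1 ≤ p.2) : coverWeight s S ≤ coverWeight s' S := by
  refine ENNReal.tsum_le_tsum fun p => ?_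
  refine ENNReal.rpow_le_rpow_of_exponent_ge ?_ hss'
  rw [ENNReal.inv_le_one]
  exact_mod_cast hS p p.2

lemma dynDeltaSup_anti_zero {Y : Set X} {ε s s' : ℝ} (hss' : s' ≤ s)
    (h : dynDeltaSup φ Y ε s' = 0) : dynDeltaSup φ Y ε s = 0 := by
  refine le_antisymm (le_trans ?_ h.le) (zero_le)
  refine iSup₂_mono fun N hN => ?_
  refine le_iInf₂ fun S hS => ?_
  refine le_trans (iInf₂_le S hS) (coverWeight_anti hss' ?_)
  exact fun p hp => hN.trans (hS.2.1 p hp)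

lemma dynDelta_iUnion_zero {Y : ℕ → Set X} {ε s : ℝ} {N : ℕ}
    (h : ∀ m, dynDelta φ (Y m) ε s N = 0) : dynDelta φ (⋃ m, Y m) ε s N = 0 := by
  refine le_antisymm ?_ (zero_le)
  refine ENNReal.le_of_forall_pos_le_add fun η hη _ => ?_
  rw [zero_add]
  obtain ⟨δ, hδpos, hδsum⟩ :=
    ENNReal.exists_pos_sum_of_countable (by exact_mod_cast hη.ne' : (η : ℝ≥0∞) ≠ 0) ℕ
  have hex : ∀ m, ∃ S : Set (X × ℕ), IsDynCover φ (Y m) ε N S ∧ coverWeight s S < δ m := by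
    intro m
    have h0 : dynDelta φ (Y m) ε s N < δ m := by
      rw [h m]; exact_mod_cast hδpos m
    rw [dynDelta, iInf_lt_iff] at h0
    obtain ⟨S, hS⟩ := h0
    rw [iInf_lt_iff] at hS
    obtain ⟨hc, hw⟩ := hS
    exact ⟨S, hc, hw⟩
  choose S hScov hSw using hex
  have hcover : IsDynCover φ (⋃ m, Y m) ε N (⋃ m, S m) := by
    refine ⟨Set.countable_iUnion fun m => (hScov m).1, ?_, ?_⟩
    · intro p hp
      obtain ⟨m, hm⟩ := Set.mem_iUnion.mp hp
      exact (hScov m).2.1 p hm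
    · refine Set.iUnion_subset fun m => (hScov m).2.2.trans ?_
      refine Set.iUnion₂_subset fun p hp => ?_
      exact Set.subset_iUnion₂ (s := fun p _ => dynBall φ p.2 p.1 ε) p (Set.mem_iUnion.mpr ⟨m, hp⟩)
  have hW : coverWeight s (⋃ m, S m) ≤ ∑' m, coverWeight s (S m) := by
    simpa [coverWeight] using
      ENNReal.tsum_iUnion_le_tsum (fun p : X × ℕ => ((p.2 : ℝ≥0∞))⁻¹ ^ s) S
  calc dynDelta φ (⋃ m, Y m) ε s N ≤ coverWeight s (⋃ m, S m) := iInf₂_le _ hcover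
    _ ≤ ∑' m, coverWeight s (S m) := hW
    _ ≤ ∑' m, (δ m : ℝ≥0∞) := ENNReal.tsum_le_tsum fun m => (hSw m).le
    _ ≤ η := hδsum.le

end Aux

/-- the σ-union property of the weak complexity index:
`C*(φ, ∪_m Y_m) = sup_m C*(φ, Y_m)`. -/
theorem weakComplexity_iUnion {X : Type*} [MetricSpace X] [CompactSpace X]
    (φ : X → X) (hφ : Continuous φ) (Y : ℕ → Set X) :
    weakComplexity φ (⋃ m, Y m) = ⨆ m, weakComplexity φ (Y m) := by
  refine le_antisymm ?_ (iSup_le fun m => weakComplexity_mono (Set.subset_iUnion Y m))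
  refine iSup₂_le fun ε hε => ?_
  set T := ⨆ m, weakComplexity φ (Y m) with hT
  refine le_of_forall_gt_imp_ge_of_dense fun c hc => ?_
  obtain ⟨s, hs0, hTs, hsc⟩ := ENNReal.lt_iff_exists_real_btwn.mp hc
  have hΔ : ∀ m, dynDeltaSup φ (Y m) ε s = 0 := by
    intro m
    have h1 : critVal φ (Y m) ε < ENNReal.ofReal s := by
      refine lt_of_le_of_lt ?_ hTs
      refine le_trans ?_ (le_iSup _ m)
      exact le_iSup₂ (f := fun (ε : ℝ) (_ : 0 < ε) => critVal φ (Y m) ε) ε hε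
    obtain ⟨c', hc'mem, hc'lt⟩ := sInf_lt_iff.mp h1
    obtain ⟨s', hs'0, rfl, hs'Δ⟩ := hc'mem
    have : s' ≤ s := by
      by_contra hcon
      exact absurd hc'lt (not_lt.mpr (ENNReal.ofReal_le_ofReal (not_le.mp hcon).le))
    exact dynDeltaSup_anti_zero this hs'Δ
  have hΔU : dynDeltaSup φ (⋃ m, Y m) ε s = 0 := by
    refine le_antisymm (iSup₂_le fun N hN => ?_) (zero_le)
    refine (dynDelta_iUnion_zero fun m => ?_).le
    refine le_antisymm (le_trans ?_ (hΔ m).le) (zero_le)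
    exact le_iSup₂ (f := fun (N : ℕ) (_ : 1 ≤ N) => dynDelta φ (Y m) ε s N) N hN
  exact le_trans (sInf_le ⟨s, hs0, rfl, hΔU⟩) hsc.le
end

section
/- Let n ≥ 1, let K ⊆ ℝⁿ be compact, let ω : K → ℝⁿ be continuous, let 𝕋ⁿ = ℝⁿ/ℤⁿ carry the quotient of the sup metric, and equip 𝕋ⁿ × K with the product (max) metric. Define φ : 𝕋ⁿ × K → 𝕋ⁿ × K by φ(θ,r) = (θ + ω(r) mod ℤⁿ, r). Then the topological entropy of φ vanishes: h_top(φ) = sup_{ε>0} limsup_{n→∞} (1/n) log G_n(ε) = 0. -/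
open Filter Set Metric
open scoped ENNReal Topology

/-- The topological entropy `h_top(φ) = sup_{ε>0} limsup_n (1/n) log G_n(ε)`. -/
noncomputable def topEntropy {X : Type*} [MetricSpace X] (φ : X → X) : ℝ≥0∞ :=
  ⨆ (ε : ℝ) (_ : 0 < ε),
    Filter.limsup
      (fun n : ℕ => ENNReal.ofReal (Real.log (coverNum φ n Set.univ ε) / n)) Filter.atTop

open scoped Classical in
noncomputable def pickAux {α : Type*} (P : Set α) (d : α) : α :=
  if h : P.Nonempty then h.choose else d

open scoped Classical in
lemma pickAux_mem {α : Type*} {P : Set α} {d : α} (h : P.Nonempty) : pickAux P d ∈ P := by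
  rw [pickAux, dif_pos h]; exact h.choose_spec

lemma gridLemma (d : ℕ) (R δ : ℝ) (hδ : 0 < δ) :
    ∃ t : Finset (Fin d → ℝ), t.card ≤ (2 * ⌈R/δ⌉₊ + 1)^d ∧
      ∀ v : Fin d → ℝ, ‖v‖ ≤ R → ∃ c ∈ t, dist v c < δ := by
  classical
  set m := ⌈R/δ⌉₊ with hm
  refine ⟨Fintype.piFinset (fun _ : Fin d => (Finset.Icc (-(m:ℤ)) m).image (fun j : ℤ => (j:ℝ) * δ)), ?_, ?_⟩
  · rw [Fintype.card_piFinset]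
    calc ∏ _i : Fin d, ((Finset.Icc (-(m:ℤ)) m).image (fun j : ℤ => (j:ℝ) * δ)).card
        ≤ ∏ _i : Fin d, (2*m+1) := by
          apply Finset.prod_le_prod (fun _ _ => Nat.zero_le _)
          intro i _
          calc ((Finset.Icc (-(m:ℤ)) m).image (fun j : ℤ => (j:ℝ)*δ)).card
              ≤ (Finset.Icc (-(m:ℤ)) m).card := Finset.card_image_le
            _ = 2*m+1 := by rw [Int.card_Icc]; omega
      _ = (2*m+1)^d := by simp
  · intro v hv
    refine ⟨fun i => (round (v i / δ) : ℝ) * δ, ?_, ?_⟩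
    · rw [Fintype.mem_piFinset]
      intro i
      refine Finset.mem_image.2 ⟨round (v i / δ), ?_, rfl⟩
      rw [Finset.mem_Icc]
      have h0 : |v i| ≤ R := by
        calc |v i| = ‖v i‖ := (Real.norm_eq_abs _).symm
          _ ≤ ‖v‖ := norm_le_pi_norm v i
          _ ≤ R := hv
      have h1 : |v i / δ| ≤ R/δ := by
        rw [abs_div, abs_of_pos hδ]
        gcongr
      have h2 : |((round (v i / δ) : ℤ) : ℝ)| ≤ |v i / δ| + 1/2 := by
        have h := abs_sub_round (v i / δ)
        calc |((round (v i / δ) : ℤ) : ℝ)| = |v i / δ - (v i / δ - round (v i / δ))| := by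
              ring_nf
          _ ≤ |v i / δ| + |v i / δ - round (v i / δ)| := abs_sub _ _
          _ ≤ |v i / δ| + 1/2 := by linarith
      have h3 : R/δ ≤ m := Nat.le_ceil _
      have h4 : |((round (v i / δ) : ℤ) : ℝ)| < (m:ℝ) + 1 := by linarith
      have h5 : |round (v i / δ)| < (m:ℤ) + 1 := by exact_mod_cast h4
      have h6 := abs_lt.mp h5
      omega
    · rw [dist_pi_lt_iff hδ]
      intro i
      rw [Real.dist_eq]
      have h := abs_sub_round (v i / δ)
      have heq : v i - (round (v i / δ) : ℝ) * δ = (v i / δ - round (v i / δ)) * δ := by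
        field_simp
      rw [heq, abs_mul, abs_of_pos hδ]
      calc |v i / δ - (round (v i / δ) : ℝ)| * δ ≤ (1/2) * δ :=
            mul_le_mul_of_nonneg_right h (le_of_lt hδ)
        _ < δ := by linarith
/-- the topological entropy of the map
`φ(θ,r) = (θ + ω(r) mod ℤⁿ, r)` on `𝕋ⁿ × K` vanishes, for any compact `K ⊆ ℝⁿ` and any
continuous `ω : K → ℝⁿ`. -/

theorem actionAngle_entropy_zero (n : ℕ) (hn : 1 ≤ n) (K : Set (Fin n → ℝ))
    (hK : IsCompact K) (ω : K → (Fin n → ℝ)) (hω : Continuous ω)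
    (φ : (Fin n → AddCircle (1:ℝ)) × K → (Fin n → AddCircle (1:ℝ)) × K)
    (hφ : ∀ p, φ p = ((fun i => p.1 i + (↑(ω p.2 i) : AddCircle (1:ℝ))), p.2)) :
    topEntropy φ = 0 := by
  classical
  haveI : Fact ((0:ℝ) < 1) := ⟨one_pos⟩
  haveI : CompactSpace ↥K := isCompact_iff_compactSpace.mp hK
  -- the explicit formula for the iterates of φ
  have hiter : ∀ (k : ℕ) (θ : Fin n → AddCircle (1:ℝ)) (r : K),
      φ^[k] (θ, r) = ((fun i => θ i + (((k : ℝ) * ω r i : ℝ) : AddCircle (1:ℝ))), r) := by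
    intro k
    induction k with
    | zero => intro θ r; simp
    | succ k ih =>
      intro θ r
      rw [Function.iterate_succ_apply', ih, hφ]
      refine Prod.ext ?_ rfl
      funext i
      show θ i + (((k:ℝ) * ω r i : ℝ) : AddCircle (1:ℝ)) + ((ω r i : ℝ) : AddCircle (1:ℝ))
        = θ i + ((((k+1:ℕ):ℝ) * ω r i : ℝ) : AddCircle (1:ℝ))
      have h1 : ((k+1 : ℕ) : ℝ) * ω r i = (k:ℝ) * ω r i + ω r i := by push_cast; ring
      rw [h1, add_assoc]
      rfl
  have hnorm : ∀ x : ℝ, ‖(x : AddCircle (1:ℝ))‖ ≤ |x| := fun x => by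
    simpa using QuotientAddGroup.norm_mk_le_norm (S := AddSubgroup.zmultiples (1:ℝ)) (m := x)
  -- the key distance estimate along orbits
  have hdist : ∀ (k : ℕ) (θ θ₀ : Fin n → AddCircle (1:ℝ)) (r r₀ : K),
      dist (φ^[k] (θ, r)) (φ^[k] (θ₀, r₀)) ≤
        max (dist θ θ₀ + (k:ℝ) * dist (ω r) (ω r₀)) (dist r r₀) := by
    intro k θ θ₀ r r₀
    rw [hiter, hiter, Prod.dist_eq]
    refine max_le_max ?_ le_rfl
    refine (dist_pi_le_iff (by positivity)).2 fun i => ?_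
    calc dist (θ i + (((k:ℝ) * ω r i : ℝ) : AddCircle (1:ℝ)))
          (θ₀ i + (((k:ℝ) * ω r₀ i : ℝ) : AddCircle (1:ℝ)))
        ≤ dist (θ i) (θ₀ i) +
          dist ((((k:ℝ) * ω r i : ℝ) : AddCircle (1:ℝ))) ((((k:ℝ) * ω r₀ i : ℝ) : AddCircle (1:ℝ))) :=
          dist_add_add_le _ _ _ _
      _ ≤ dist θ θ₀ + (k:ℝ) * dist (ω r) (ω r₀) := by
          refine add_le_add (dist_le_pi_dist θ θ₀ i) ?_
          rw [dist_eq_norm]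
          have hsub : ((((k:ℝ) * ω r i : ℝ) : AddCircle (1:ℝ)) - (((k:ℝ) * ω r₀ i : ℝ) : AddCircle (1:ℝ)))
              = ((((k:ℝ) * ω r i - (k:ℝ) * ω r₀ i : ℝ)) : AddCircle (1:ℝ)) := rfl
          rw [hsub]
          calc ‖((((k:ℝ) * ω r i - (k:ℝ) * ω r₀ i : ℝ)) : AddCircle (1:ℝ))‖
              ≤ |(k:ℝ) * ω r i - (k:ℝ) * ω r₀ i| := hnorm _
            _ = (k:ℝ) * |ω r i - ω r₀ i| := by
                rw [← mul_sub, abs_mul, abs_of_nonneg (by positivity : (0:ℝ) ≤ (k:ℝ))]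
            _ ≤ (k:ℝ) * dist (ω r) (ω r₀) := by
                refine mul_le_mul_of_nonneg_left ?_ (by positivity)
                rw [← Real.dist_eq]
                exact dist_le_pi_dist (ω r) (ω r₀) i
  -- a uniform bound on ω
  obtain ⟨R₀, hR₀⟩ : ∃ R : ℝ, ∀ r : K, ‖ω r‖ ≤ R := by
    obtain ⟨R, hR⟩ := (isCompact_range hω).isBounded.subset_closedBall 0
    exact ⟨R, fun r => by simpa using hR (mem_range_self r)⟩
  set R := max R₀ 0 with hRdef
  have hR : ∀ r : K, ‖ω r‖ ≤ R := fun r => (hR₀ r).trans (le_max_left _ _)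
  have hR0 : 0 ≤ R := le_max_right _ _
  -- the main estimate : for every ε > 0 the limsup is zero
  have main : ∀ ε : ℝ, 0 < ε →
      Filter.limsup (fun N : ℕ =>
        ENNReal.ofReal (Real.log (coverNum φ N Set.univ ε) / N)) Filter.atTop = 0 := by
    intro ε hε
    obtain ⟨tT, hsTcov⟩ : ∃ tT : Finset (Fin n → AddCircle (1:ℝ)),
        (univ : Set (Fin n → AddCircle (1:ℝ))) ⊆ ⋃ y ∈ tT, ball y (ε/2) := by
      obtain ⟨s, hfin, hcov⟩ :=
        (Metric.totallyBounded_iff.mp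
          ((isCompact_univ (X := Fin n → AddCircle (1:ℝ))).totallyBounded)) (ε/2) (by positivity)
      exact ⟨hfin.toFinset, by simpa [Set.Finite.mem_toFinset] using hcov⟩
    obtain ⟨tK, hsKcov⟩ : ∃ tK : Finset ↥K,
        (univ : Set ↥K) ⊆ ⋃ y ∈ tK, ball y (ε/2) := by
      obtain ⟨s, hfin, hcov⟩ :=
        (Metric.totallyBounded_iff.mp ((isCompact_univ (X := ↥K)).totallyBounded)) (ε/2)
          (by positivity)
      exact ⟨hfin.toFinset, by simpa [Set.Finite.mem_toFinset] using hcov⟩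
    set A : ℝ := (tT.card : ℝ) * tK.card + 1 with hA
    set C : ℝ := 16*R/ε + 3 with hC
    have hA1 : 1 ≤ A := by
      have : (0:ℝ) ≤ (tT.card : ℝ) * tK.card := by positivity
      linarith
    have hC1 : 1 ≤ C := by
      have h : (0:ℝ) ≤ 16*R/ε := by positivity
      rw [hC]
      linarith
    -- the covering estimate, polynomial in N
    have hcov : ∀ N : ℕ, 1 ≤ N → (coverNum φ N Set.univ ε : ℝ) ≤ A * (C*N)^n := by
      intro N hN
      have hN0 : (0:ℝ) < N := by exact_mod_cast hN
      set δ : ℝ := ε / (8*N) with hδdef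
      have hδ : 0 < δ := by positivity
      obtain ⟨tg, htgcard, htgcov⟩ := gridLemma n R δ hδ
      have hle12 : coverNum φ N Set.univ ε ≤ tT.card * (tK.card * tg.card) := by
       set P : ↥K → (Fin n → ℝ) → Set ↥K :=
        fun a v => {r' | dist r' a < ε/2 ∧ dist (ω r') v < δ} with hP
       set t : Finset ((Fin n → AddCircle (1:ℝ)) × ↥K) :=
        (tT ×ˢ (tK ×ˢ tg)).image (fun q => (q.1, pickAux (P q.2.1 q.2.2) q.2.1)) with ht
       have hcover : (univ : Set ((Fin n → AddCircle (1:ℝ)) × ↥K)) ⊆ ⋃ x ∈ t, dynBall φ N x ε := by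
        rintro ⟨θ, r⟩ -
        obtain ⟨θ₀, hθ₀s, hθ₀⟩ : ∃ θ₀ ∈ tT, dist θ θ₀ < ε/2 := by
          have h := hsTcov (mem_univ θ)
          rw [Set.mem_iUnion₂] at h
          obtain ⟨y, hy, hb⟩ := h
          exact ⟨y, hy, mem_ball.mp hb⟩
        obtain ⟨a, has, ha⟩ : ∃ a ∈ tK, dist r a < ε/2 := by
          have h := hsKcov (mem_univ r)
          rw [Set.mem_iUnion₂] at h
          obtain ⟨y, hy, hb⟩ := h
          exact ⟨y, hy, mem_ball.mp hb⟩
        obtain ⟨v, hvg, hv⟩ := htgcov (ω r) (hR r)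
        have hrP : r ∈ P a v := ⟨ha, hv⟩
        have hne : (P a v).Nonempty := ⟨r, hrP⟩
        set r₀ := pickAux (P a v) a with hr₀def
        have hr₀ : r₀ ∈ P a v := pickAux_mem hne
        refine Set.mem_iUnion₂.2 ⟨(θ₀, r₀), ?_, ?_⟩
        · refine Finset.mem_image.2 ⟨(θ₀, a, v), ?_, rfl⟩
          refine Finset.mem_product.2 ⟨hθ₀s, ?_⟩
          exact Finset.mem_product.2 ⟨has, hvg⟩
        · show dynDist φ N (θ₀, r₀) (θ, r) < ε
          have hωrr₀ : dist (ω r₀) (ω r) ≤ 2*δ := by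
            calc dist (ω r₀) (ω r) ≤ dist (ω r₀) v + dist (ω r) v := dist_triangle_right _ _ _
              _ ≤ 2*δ := by
                  have := hr₀.2
                  linarith
          have hrr₀ : dist r₀ r < ε := by
            calc dist r₀ r ≤ dist r₀ a + dist r a := dist_triangle_right _ _ _
              _ < ε := by
                  have := hr₀.1
                  linarith
          have hbound : ∀ k : Fin N, dist (φ^[(k:ℕ)] (θ₀, r₀)) (φ^[(k:ℕ)] (θ, r)) ≤
              max (dist θ₀ θ + (N:ℝ)*(2*δ)) (dist r₀ r) := by
            intro k
            refine (hdist (k:ℕ) θ₀ θ r₀ r).trans (max_le_max ?_ le_rfl)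
            have hk : (((k:ℕ)):ℝ) ≤ (N:ℝ) := by exact_mod_cast (le_of_lt k.2)
            have hmul : (((k:ℕ)):ℝ) * dist (ω r₀) (ω r) ≤ (N:ℝ)*(2*δ) :=
              mul_le_mul hk hωrr₀ dist_nonneg (by positivity)
            linarith
          have hNδ : (N:ℝ)*(2*δ) = ε/4 := by
            rw [hδdef]
            field_simp
            ring
          haveI : Nonempty (Fin N) := ⟨⟨0, hN⟩⟩
          have hle : dynDist φ N (θ₀, r₀) (θ, r) ≤
              max (dist θ₀ θ + (N:ℝ)*(2*δ)) (dist r₀ r) := ciSup_le hbound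
          refine lt_of_le_of_lt hle (max_lt ?_ hrr₀)
          rw [hNδ]
          rw [dist_comm θ₀ θ]
          linarith
       have hle1 : coverNum φ N Set.univ ε ≤ t.card := Nat.sInf_le ⟨t, rfl, hcover⟩
       have hle2 : t.card ≤ tT.card * (tK.card * tg.card) := by
         refine le_trans Finset.card_image_le ?_
         rw [Finset.card_product, Finset.card_product]
       exact le_trans hle1 hle2
      have hmbound : ((2 * ⌈R/δ⌉₊ + 1 : ℕ) : ℝ) ≤ C * N := by
        have h1 : (⌈R/δ⌉₊ : ℝ) < R/δ + 1 := Nat.ceil_lt_add_one (by positivity)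
        have h2 : R/δ = 8*(N:ℝ)*R/ε := by
          rw [hδdef, div_div_eq_mul_div]
          ring
        have hN1 : (1:ℝ) ≤ (N:ℝ) := by exact_mod_cast hN
        have h3 : 8*(N:ℝ)*R/ε = (8*R/ε) * N := by ring
        push_cast
        rw [hC]
        have h4 : (⌈R/δ⌉₊ : ℝ) < (8*R/ε) * N + 1 := by rw [← h3, ← h2]; exact h1
        have h5 : (0:ℝ) ≤ 16*R/ε := by positivity
        have h6 : (16 * R / ε + 3) * (N:ℝ) = 2*(8*R/ε*(N:ℝ)) + 3*(N:ℝ) := by ring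
        have h7 : 8*R/ε*(N:ℝ) = (8*R/ε)*(N:ℝ) := by ring
        linarith
      have hgpow : ((tg.card : ℕ) : ℝ) ≤ (C*N)^n := by
        calc ((tg.card : ℕ) : ℝ) ≤ (((2 * ⌈R/δ⌉₊ + 1)^n : ℕ) : ℝ) := by exact_mod_cast htgcard
          _ = (((2 * ⌈R/δ⌉₊ + 1 : ℕ) : ℝ))^n := by push_cast; ring
          _ ≤ (C*N)^n := by
              refine pow_le_pow_left₀ (by positivity) hmbound n
      calc (coverNum φ N Set.univ ε : ℝ)
          ≤ ((tT.card * (tK.card * tg.card) : ℕ) : ℝ) := by exact_mod_cast hle12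
        _ = ((tT.card : ℝ) * tK.card) * tg.card := by push_cast; ring
        _ ≤ A * (C*N)^n := by
            refine mul_le_mul ?_ hgpow (by positivity) (by linarith)
            rw [hA]
            linarith
    -- convergence of the logarithmic averages to zero
    have htends : Tendsto (fun N : ℕ => Real.log (coverNum φ N Set.univ ε) / N) atTop (𝓝 0) := by
      have h1 : Tendsto (fun N : ℕ => Real.log A / N) atTop (𝓝 0) :=
        tendsto_const_div_atTop_nhds_zero_nat _
      have h2 : Tendsto (fun N : ℕ => (n:ℝ) * Real.log C / N) atTop (𝓝 0) :=
        tendsto_const_div_atTop_nhds_zero_nat _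
      have h3 : Tendsto (fun N : ℕ => Real.log N / N) atTop (𝓝 0) :=
        (Real.isLittleO_log_id_atTop.tendsto_div_nhds_zero).comp tendsto_natCast_atTop_atTop
      have h4 : Tendsto (fun N : ℕ => (n:ℝ) * (Real.log N / N)) atTop (𝓝 0) := by
        simpa using h3.const_mul (n:ℝ)
      have hub : Tendsto
          (fun N : ℕ => (Real.log A + (n:ℝ) * Real.log C + (n:ℝ) * Real.log N) / N)
          atTop (𝓝 0) := by
        have := (h1.add h2).add h4
        simp only [add_zero] at this
        refine Tendsto.congr (fun N => ?_) this
        ring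
      refine squeeze_zero' ?_ ?_ hub
      · filter_upwards with N
        exact div_nonneg (Real.log_natCast_nonneg _) (Nat.cast_nonneg _)
      · filter_upwards [eventually_ge_atTop 1] with N hN
        have hN0 : (0:ℝ) < N := by exact_mod_cast hN
        have hN1 : (1:ℝ) ≤ (N:ℝ) := by exact_mod_cast hN
        have hCN : (1:ℝ) ≤ C * N := by nlinarith
        have hrhs : Real.log (A * (C*N)^n) =
            Real.log A + (n:ℝ) * Real.log C + (n:ℝ) * Real.log N := by
          rw [Real.log_mul (by linarith) (by positivity), Real.log_pow,
            Real.log_mul (by linarith) (by linarith)]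
          ring
        have hlog : Real.log (coverNum φ N Set.univ ε) ≤
            Real.log A + (n:ℝ) * Real.log C + (n:ℝ) * Real.log N := by
          rcases Nat.eq_zero_or_pos (coverNum φ N Set.univ ε) with h0 | h0
          · rw [h0]
            simp only [Nat.cast_zero, Real.log_zero]
            have l1 : 0 ≤ Real.log A := Real.log_nonneg hA1
            have l2 : 0 ≤ Real.log C := Real.log_nonneg hC1
            have l3 : 0 ≤ Real.log N := Real.log_nonneg hN1
            positivity
          · rw [← hrhs]
            refine Real.log_le_log ?_ (hcov N hN)
            exact_mod_cast h0
        gcongr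
    have h0 : Tendsto (fun N : ℕ =>
        ENNReal.ofReal (Real.log (coverNum φ N Set.univ ε) / N)) atTop (𝓝 0) := by
      simpa using ENNReal.tendsto_ofReal htends
    exact h0.limsup_eq
  -- conclusion
  unfold topEntropy
  refine le_antisymm (iSup₂_le fun ε hε => le_of_eq (main ε hε)) zero_le
end

section
/- Let (X,d) be a compact metric space and Φ : [0,+∞) × X → X a continuous semi-flow (Φ⁰ = id and Φˢ ∘ Φᵗ = Φ^{s+t} for all s,t ≥ 0), and let φ = Φ¹ be its time-one map. Then the continuous weak complexity index equals the discrete one: C*_c(Φ) = C*(φ). -/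
open Filter Set Metric
open scoped ENNReal NNReal Topology

/-- The continuous-time dynamical distance `d_t^Φ(x,y) = sup_{0 ≤ τ ≤ t-1} d(Φ^τ x, Φ^τ y)`
associated with a semi-flow `Φ : [0,∞) × X → X`. -/
noncomputable def flowDist {X : Type*} [MetricSpace X] (Φ : ℝ≥0 × X → X) (t : ℝ)
    (x y : X) : ℝ :=
  ⨆ τ : {τ : ℝ≥0 // (τ : ℝ) ≤ t - 1}, dist (Φ (τ.1, x)) (Φ (τ.1, y))

/-- The open ball of radius `ε` centered at `x` for the distance `d_t^Φ`. -/
def flowBall {X : Type*} [MetricSpace X] (Φ : ℝ≥0 × X → X) (t : ℝ) (x : X) (ε : ℝ) :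
    Set X :=
  {y | flowDist Φ t x y < ε}

/-- The weight `M(C,s) = Σ_i (1/τ_i)^s` of a countable family of flow balls, encoded as a
set of pairs `(center, order)`. -/
noncomputable def flowCoverWeight {X : Type*} [MetricSpace X] (s : ℝ)
    (S : Set (X × ℝ)) : ℝ≥0∞ :=
  ∑' p : S, (ENNReal.ofReal (p : X × ℝ).2)⁻¹ ^ s

/-- A covering of `X` of order `≥ t` at scale `ε` by flow balls. -/
def IsFlowCover {X : Type*} [MetricSpace X] (Φ : ℝ≥0 × X → X) (ε t : ℝ)
    (S : Set (X × ℝ)) : Prop :=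
  S.Countable ∧ (∀ p ∈ S, t ≤ p.2) ∧ Set.univ ⊆ ⋃ p ∈ S, flowBall Φ p.2 p.1 ε

/-- `δ^Φ(ε,s,t)`: the infimum of the weights of coverings of `X` of order `≥ t`. -/
noncomputable def flowDelta {X : Type*} [MetricSpace X] (Φ : ℝ≥0 × X → X)
    (ε s t : ℝ) : ℝ≥0∞ :=
  ⨅ (S : Set (X × ℝ)) (_ : IsFlowCover Φ ε t S), flowCoverWeight s S

/-- `Δ^Φ(ε,s) = sup_{t ≥ 1} δ^Φ(ε,s,t)`. -/
noncomputable def flowDeltaSup {X : Type*} [MetricSpace X] (Φ : ℝ≥0 × X → X)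
    (ε s : ℝ) : ℝ≥0∞ :=
  ⨆ (t : ℝ) (_ : 1 ≤ t), flowDelta Φ ε s t

/-- The critical value `s_c^Φ(ε) = inf {s ≥ 0 | Δ^Φ(ε,s) = 0}` (with `inf ∅ = +∞`). -/
noncomputable def flowCritVal {X : Type*} [MetricSpace X] (Φ : ℝ≥0 × X → X)
    (ε : ℝ) : ℝ≥0∞ :=
  sInf {c : ℝ≥0∞ | ∃ s : ℝ, 0 ≤ s ∧ c = ENNReal.ofReal s ∧ flowDeltaSup Φ ε s = 0}

/-- The continuous weak complexity index `C*_c(Φ) = sup_{ε>0} s_c^Φ(ε)`. -/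
noncomputable def flowWeakComplexity {X : Type*} [MetricSpace X]
    (Φ : ℝ≥0 × X → X) : ℝ≥0∞ :=
  ⨆ (ε : ℝ) (_ : 0 < ε), flowCritVal Φ ε

section AuxComplexity
set_option linter.unusedSectionVars false

variable {X : Type*} [MetricSpace X] [CompactSpace X]

private lemma exists_dist_bound (X : Type*) [MetricSpace X] [CompactSpace X] :
    ∃ C : ℝ, ∀ a b : X, dist a b ≤ C := by
  obtain ⟨C, hC⟩ := Metric.isBounded_iff.mp (isCompact_univ (X := X)).isBounded
  exact ⟨C, fun a b => hC (mem_univ a) (mem_univ b)⟩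

private lemma flowDist_bddAbove (Φ : ℝ≥0 × X → X) (t : ℝ) (x y : X) :
    BddAbove (Set.range fun τ : {τ : ℝ≥0 // (τ : ℝ) ≤ t - 1} =>
      dist (Φ (τ.1, x)) (Φ (τ.1, y))) := by
  obtain ⟨C, hC⟩ := exists_dist_bound X
  exact ⟨C, by rintro r ⟨τ, rfl⟩; exact hC _ _⟩

private lemma iter_eq (Φ : ℝ≥0 × X → X) (hid : ∀ x, Φ (0, x) = x)
    (hsemi : ∀ (s t : ℝ≥0) (x : X), Φ (s, Φ (t, x)) = Φ (s + t, x)) :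
    ∀ (k : ℕ) (x : X), (fun x => Φ (1, x))^[k] x = Φ ((k : ℝ≥0), x) := by
  intro k
  induction k with
  | zero => intro x; simp [hid]
  | succ k ih =>
    intro x
    rw [Function.iterate_succ_apply', ih, hsemi]
    have : ((1 : ℝ≥0) + (k : ℝ≥0)) = ((k + 1 : ℕ) : ℝ≥0) := by push_cast; ring
    rw [this]

private lemma dynDist_le_flowDist (Φ : ℝ≥0 × X → X) (hid : ∀ x, Φ (0, x) = x)
    (hsemi : ∀ (s t : ℝ≥0) (x : X), Φ (s, Φ (t, x)) = Φ (s + t, x))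
    {n : ℕ} (hn : 1 ≤ n) {t : ℝ} (hnt : (n : ℝ) ≤ t) (x y : X) :
    dynDist (fun x => Φ (1, x)) n x y ≤ flowDist Φ t x y := by
  have : Nonempty (Fin n) := ⟨⟨0, hn⟩⟩
  refine ciSup_le fun k => ?_
  rw [iter_eq Φ hid hsemi, iter_eq Φ hid hsemi]
  have hk : (((k : ℕ) : ℝ≥0) : ℝ) ≤ t - 1 := by
    have h1 : ((k : ℕ) : ℝ) ≤ (n : ℝ) - 1 := by
      have h := k.2
      have h' : ((k : ℕ) : ℝ) + 1 ≤ (n : ℝ) := by exact_mod_cast h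
      linarith
    push_cast
    linarith
  exact le_ciSup (flowDist_bddAbove Φ t x y) ⟨((k : ℕ) : ℝ≥0), hk⟩

private lemma flowBall_subset_dynBall (Φ : ℝ≥0 × X → X) (hid : ∀ x, Φ (0, x) = x)
    (hsemi : ∀ (s t : ℝ≥0) (x : X), Φ (s, Φ (t, x)) = Φ (s + t, x))
    {n : ℕ} (hn : 1 ≤ n) {t : ℝ} (hnt : (n : ℝ) ≤ t) (x : X) (ε : ℝ) :
    flowBall Φ t x ε ⊆ dynBall (fun x => Φ (1, x)) n x ε := fun y hy =>
  lt_of_le_of_lt (dynDist_le_flowDist Φ hid hsemi hn hnt x y) hy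

/-- Uniform continuity of the flow on time interval `[0,1]`. -/
private lemma unif_cont (Φ : ℝ≥0 × X → X) (hΦ : Continuous Φ) {ε : ℝ} (hε : 0 < ε) :
    ∃ δ > 0, ∀ σ : ℝ≥0, σ ≤ 1 → ∀ x y : X, dist x y < δ →
      dist (Φ (σ, x)) (Φ (σ, y)) < ε := by
  set g : ℝ≥0 × X × X → ℝ := fun p => dist (Φ (p.1, p.2.1)) (Φ (p.1, p.2.2)) with hg
  have hgc : Continuous g := by
    apply Continuous.dist
    · exact hΦ.comp (continuous_fst.prodMk (continuous_fst.comp continuous_snd))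
    · exact hΦ.comp (continuous_fst.prodMk (continuous_snd.comp continuous_snd))
  set A : Set (ℝ≥0 × X × X) := {p | p.1 ≤ 1 ∧ ε ≤ g p} with hA
  have hAclosed : IsClosed A :=
    (isClosed_le continuous_fst continuous_const).inter (isClosed_le continuous_const hgc)
  have hAcomp : IsCompact A := by
    refine (((isCompact_Icc (a := (0:ℝ≥0)) (b := 1)).prod
      (isCompact_univ.prod isCompact_univ))).of_isClosed_subset hAclosed ?_
    rintro ⟨σ, x, y⟩ ⟨h1, _⟩
    exact ⟨⟨zero_le, h1⟩, mem_univ _, mem_univ _⟩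
  rcases eq_empty_or_nonempty A with hAe | hAne
  · refine ⟨1, one_pos, fun σ hσ x y hxy => ?_⟩
    by_contra h
    have : (σ, x, y) ∈ A := ⟨hσ, not_lt.mp h⟩
    rw [hAe] at this
    exact this
  · obtain ⟨p₀, hp₀A, hp₀min⟩ := hAcomp.exists_isMinOn hAne
      ((continuous_fst.comp continuous_snd).dist (continuous_snd.comp continuous_snd)).continuousOn
    set δ := dist p₀.2.1 p₀.2.2 with hδ
    have hδpos : 0 < δ := by
      rcases lt_or_eq_of_le (dist_nonneg (x := p₀.2.1) (y := p₀.2.2)) with h | h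
      · exact h
      · exfalso
        have heq : p₀.2.1 = p₀.2.2 := by
          rw [← dist_eq_zero]; exact h.symm
        have := hp₀A.2
        rw [hg] at this
        simp only [heq, dist_self] at this
        linarith
    refine ⟨δ, hδpos, fun σ hσ x y hxy => ?_⟩
    by_contra h
    have hmem : (σ, x, y) ∈ A := ⟨hσ, not_lt.mp h⟩
    have h2 : δ ≤ dist x y := hp₀min hmem
    linarith

private lemma dynBall_subset_flowBall (Φ : ℝ≥0 × X → X) (hid : ∀ x, Φ (0, x) = x)
    (hsemi : ∀ (s t : ℝ≥0) (x : X), Φ (s, Φ (t, x)) = Φ (s + t, x))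
    {ε δ : ℝ} (hε : 0 < ε)
    (hδ : ∀ σ : ℝ≥0, σ ≤ 1 → ∀ x y : X, dist x y < δ → dist (Φ (σ, x)) (Φ (σ, y)) < ε / 2)
    {n : ℕ} (hn : 1 ≤ n) (x : X) :
    dynBall (fun x => Φ (1, x)) n x δ ⊆ flowBall Φ (n : ℝ) x ε := by
  intro y hy
  set φ : X → X := fun x => Φ (1, x) with hφ
  have hy' : (⨆ k : Fin n, dist (φ^[(k : ℕ)] x) (φ^[(k : ℕ)] y)) < δ := hy
  have hdyn : ∀ k : Fin n, dist (φ^[(k : ℕ)] x) (φ^[(k : ℕ)] y) < δ := fun k =>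
    lt_of_le_of_lt (le_ciSup (f := fun k : Fin n => dist (φ^[(k : ℕ)] x) (φ^[(k : ℕ)] y))
      (Set.finite_range _).bddAbove k) hy'
  have hne : Nonempty {τ : ℝ≥0 // (τ : ℝ) ≤ (n : ℝ) - 1} := by
    refine ⟨⟨0, ?_⟩⟩
    have : (1 : ℝ) ≤ (n : ℝ) := by exact_mod_cast hn
    simp only [NNReal.coe_zero]
    linarith
  have hle : flowDist Φ (n : ℝ) x y ≤ ε / 2 := by
    refine ciSup_le fun τ => ?_
    set k : ℕ := ⌊τ.1⌋₊ with hk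
    have hk_le : (k : ℝ≥0) ≤ τ.1 := Nat.floor_le zero_le
    have hkn : k < n := by
      have h1 : ((k : ℝ≥0) : ℝ) ≤ (τ.1 : ℝ) := hk_le
      have h2 := τ.2
      have : (k : ℝ) < (n : ℝ) := by
        push_cast at h1 ⊢
        linarith
      exact_mod_cast this
    set σ : ℝ≥0 := τ.1 - (k : ℝ≥0) with hσ
    have hσ1 : σ ≤ 1 := by
      have := Nat.lt_floor_add_one τ.1
      rw [hσ]
      exact tsub_le_iff_right.mpr (by rw [add_comm]; exact this.le)
    have hsum : σ + (k : ℝ≥0) = τ.1 := tsub_add_cancel_of_le hk_le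
    have hτx : Φ (τ.1, x) = Φ (σ, φ^[k] x) := by
      rw [iter_eq Φ hid hsemi, hsemi, hsum]
    have hτy : Φ (τ.1, y) = Φ (σ, φ^[k] y) := by
      rw [iter_eq Φ hid hsemi, hsemi, hsum]
    rw [hτx, hτy]
    exact (hδ σ hσ1 _ _ (hdyn ⟨k, hkn⟩)).le
  exact lt_of_le_of_lt hle (by linarith)

private lemma flowDelta_mono (Φ : ℝ≥0 × X → X) (ε s : ℝ) {t t' : ℝ} (h : t ≤ t') :
    flowDelta Φ ε s t ≤ flowDelta Φ ε s t' :=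
  le_iInf₂ fun S hS => iInf₂_le S ⟨hS.1, fun p hp => h.trans (hS.2.1 p hp), hS.2.2⟩

private lemma flowDelta_le_dynDelta (Φ : ℝ≥0 × X → X)
    {ε δ : ℝ}
    (hsub : ∀ n : ℕ, 1 ≤ n → ∀ x : X,
      dynBall (fun x => Φ (1, x)) n x δ ⊆ flowBall Φ (n : ℝ) x ε)
    (s : ℝ) {N : ℕ} (hN : 1 ≤ N) :
    flowDelta Φ ε s (N : ℝ) ≤ dynDelta (fun x => Φ (1, x)) Set.univ δ s N := by
  refine le_iInf₂ fun S hS => ?_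
  set f : X × ℕ → X × ℝ := fun p => (p.1, (p.2 : ℝ)) with hf
  have hfinj : Function.Injective f := by
    rintro ⟨a, m⟩ ⟨b, k⟩ h
    simp only [hf, Prod.mk.injEq] at h
    exact Prod.ext h.1 (Nat.cast_injective h.2)
  have hcov : IsFlowCover Φ ε (N : ℝ) (f '' S) := by
    refine ⟨hS.1.image f, ?_, ?_⟩
    · rintro q ⟨p, hp, rfl⟩
      exact_mod_cast Nat.cast_le.mpr (hS.2.1 p hp)
    · intro y hy
      obtain ⟨_, ⟨p, rfl⟩, _, ⟨hp, rfl⟩, hyp⟩ := hS.2.2 (mem_univ y)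
      have h1n : 1 ≤ p.2 := hN.trans (hS.2.1 p hp)
      refine mem_iUnion₂.mpr ⟨f p, ⟨p, hp, rfl⟩, ?_⟩
      exact hsub p.2 h1n p.1 hyp
  refine (iInf₂_le (f '' S) hcov).trans (le_of_eq ?_)
  rw [flowCoverWeight, coverWeight]
  rw [← (Equiv.Set.image f S hfinj).tsum_eq
    (fun q : ↥(f '' S) => (ENNReal.ofReal (q : X × ℝ).2)⁻¹ ^ s)]
  refine tsum_congr fun p => ?_
  have heq : ((Equiv.Set.image f S hfinj) p : X × ℝ) = f (p : X × ℕ) := rfl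
  rw [heq]
  simp [hf, ENNReal.ofReal_natCast]

private lemma dynDelta_le_flowCoverWeight (Φ : ℝ≥0 × X → X)
    (hid : ∀ x, Φ (0, x) = x)
    (hsemi : ∀ (s t : ℝ≥0) (x : X), Φ (s, Φ (t, x)) = Φ (s + t, x))
    (ε : ℝ) {s : ℝ} (hs : 0 ≤ s) {N : ℕ} (hN : 1 ≤ N)
    {S : Set (X × ℝ)} (hS : IsFlowCover Φ ε (N : ℝ) S) :
    dynDelta (fun x => Φ (1, x)) Set.univ ε s N ≤ (2 : ℝ≥0∞) ^ s * flowCoverWeight s S := by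
  set f : X × ℝ → X × ℕ := fun p => (p.1, ⌊p.2⌋₊) with hf
  have hord : ∀ p ∈ S, (1 : ℝ) ≤ p.2 := fun p hp => by
    have := hS.2.1 p hp
    have h1 : (1 : ℝ) ≤ (N : ℝ) := by exact_mod_cast hN
    linarith
  have hcov : IsDynCover (fun x => Φ (1, x)) Set.univ ε N (f '' S) := by
    refine ⟨hS.1.image f, ?_, ?_⟩
    · rintro q ⟨p, hp, rfl⟩
      exact Nat.le_floor (hS.2.1 p hp)
    · intro y hy
      obtain ⟨_, ⟨p, rfl⟩, _, ⟨hp, rfl⟩, hyp⟩ := hS.2.2 (mem_univ y)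
      have h1 : (1 : ℝ) ≤ p.2 := hord p hp
      have hfl1 : 1 ≤ ⌊p.2⌋₊ := Nat.le_floor (by exact_mod_cast h1)
      refine mem_iUnion₂.mpr ⟨f p, ⟨p, hp, rfl⟩, ?_⟩
      exact flowBall_subset_dynBall Φ hid hsemi hfl1
        (Nat.floor_le (by linarith)) p.1 ε hyp
  refine (iInf₂_le (f '' S) hcov).trans ?_
  -- weight estimate
  have hch : ∀ q : ↥(f '' S), ∃ p : ↥S, f (p : X × ℝ) = (q : X × ℕ) := fun q => by
    obtain ⟨p, hp, hfp⟩ := q.2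
    exact ⟨⟨p, hp⟩, hfp⟩
  choose g hg using hch
  have hginj : Function.Injective g := fun a b h =>
    Subtype.ext (by rw [← hg a, ← hg b, h])
  have hpt : ∀ q : ↥(f '' S),
      (((q : X × ℕ).2 : ℝ≥0∞))⁻¹ ^ s ≤
        (2 : ℝ≥0∞) ^ s * (ENNReal.ofReal ((g q : X × ℝ)).2)⁻¹ ^ s := by
    intro q
    set τ : ℝ := ((g q : X × ℝ)).2 with hτ
    have hτS : (g q : X × ℝ) ∈ S := (g q).2
    have hτ1 : (1 : ℝ) ≤ τ := hord _ hτS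
    have hq2 : (q : X × ℕ).2 = ⌊τ⌋₊ := by rw [← hg q]
    have hfl1 : 1 ≤ ⌊τ⌋₊ := Nat.le_floor (by exact_mod_cast hτ1)
    have hτle : τ ≤ 2 * (⌊τ⌋₊ : ℝ) := by
      have h1 := Nat.lt_floor_add_one τ
      have h2 : (1 : ℝ) ≤ (⌊τ⌋₊ : ℝ) := by exact_mod_cast hfl1
      linarith
    have hkey : ((⌊τ⌋₊ : ℝ≥0∞))⁻¹ ≤ 2 * (ENNReal.ofReal τ)⁻¹ := by
      have h0 : ENNReal.ofReal τ ≤ 2 * (⌊τ⌋₊ : ℝ≥0∞) := by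
        calc ENNReal.ofReal τ ≤ ENNReal.ofReal (2 * (⌊τ⌋₊ : ℝ)) :=
              ENNReal.ofReal_le_ofReal hτle
          _ = 2 * (⌊τ⌋₊ : ℝ≥0∞) := by
              rw [ENNReal.ofReal_mul (by norm_num)]
              simp [ENNReal.ofReal_natCast]
      have h1 : (2 * (⌊τ⌋₊ : ℝ≥0∞))⁻¹ ≤ (ENNReal.ofReal τ)⁻¹ :=
        ENNReal.inv_le_inv' h0
      have h2 : ((⌊τ⌋₊ : ℝ≥0∞))⁻¹ = 2 * (2 * (⌊τ⌋₊ : ℝ≥0∞))⁻¹ := by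
        rw [ENNReal.mul_inv (Or.inl (by norm_num)) (Or.inl (by norm_num)),
          ← mul_assoc, ENNReal.mul_inv_cancel (by norm_num) (by norm_num), one_mul]
      rw [h2]
      exact mul_le_mul_right h1 2
    calc (((q : X × ℕ).2 : ℝ≥0∞))⁻¹ ^ s = ((⌊τ⌋₊ : ℝ≥0∞))⁻¹ ^ s := by rw [hq2]
      _ ≤ (2 * (ENNReal.ofReal τ)⁻¹) ^ s := ENNReal.rpow_le_rpow hkey hs
      _ = (2 : ℝ≥0∞) ^ s * (ENNReal.ofReal τ)⁻¹ ^ s := ENNReal.mul_rpow_of_nonneg _ _ hs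
  calc coverWeight s (f '' S)
      = ∑' q : ↥(f '' S), (((q : X × ℕ).2 : ℝ≥0∞))⁻¹ ^ s := rfl
    _ ≤ ∑' q : ↥(f '' S), (2 : ℝ≥0∞) ^ s * (ENNReal.ofReal ((g q : X × ℝ)).2)⁻¹ ^ s :=
        ENNReal.tsum_le_tsum hpt
    _ ≤ ∑' p : ↥S, (2 : ℝ≥0∞) ^ s * (ENNReal.ofReal ((p : X × ℝ)).2)⁻¹ ^ s :=
        ENNReal.tsum_comp_le_tsum_of_injective hginj _
    _ = (2 : ℝ≥0∞) ^ s * flowCoverWeight s S := ENNReal.tsum_mul_left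

end AuxComplexity
/-- for a continuous semi-flow `Φ` on a compact metric space with time-one
map `φ = Φ¹`, the continuous weak complexity index equals the discrete one:
`C*_c(Φ) = C*(φ)`. -/
theorem flowWeakComplexity_eq_weakComplexity {X : Type*} [MetricSpace X] [CompactSpace X]
    (Φ : ℝ≥0 × X → X) (hΦ : Continuous Φ)
    (hid : ∀ x, Φ (0, x) = x)
    (hsemi : ∀ (s t : ℝ≥0) (x : X), Φ (s, Φ (t, x)) = Φ (s + t, x)) :
    flowWeakComplexity Φ = weakComplexity (fun x => Φ (1, x)) Set.univ := by
  set φ : X → X := fun x => Φ (1, x) with hφdef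
  apply le_antisymm
  · -- flowWeakComplexity ≤ weakComplexity
    rw [flowWeakComplexity, weakComplexity]
    refine iSup₂_le fun ε hε => ?_
    obtain ⟨δ, hδ0, hδ⟩ := unif_cont Φ hΦ (half_pos hε)
    have hsub : ∀ n : ℕ, 1 ≤ n → ∀ x : X,
        dynBall φ n x δ ⊆ flowBall Φ (n : ℝ) x ε := fun n hn x =>
      dynBall_subset_flowBall Φ hid hsemi hε hδ hn x
    have hcrit : flowCritVal Φ ε ≤ critVal φ Set.univ δ := by
      refine sInf_le_sInf ?_
      rintro c ⟨s, hs0, rfl, hzero⟩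
      refine ⟨s, hs0, rfl, ?_⟩
      rw [flowDeltaSup]
      refine le_antisymm (iSup₂_le fun t ht => ?_) (zero_le)
      have hN : 1 ≤ ⌈t⌉₊ := Nat.one_le_ceil_iff.mpr (by linarith)
      calc flowDelta Φ ε s t ≤ flowDelta Φ ε s ((⌈t⌉₊ : ℕ) : ℝ) :=
            flowDelta_mono Φ ε s (Nat.le_ceil t)
        _ ≤ dynDelta φ Set.univ δ s ⌈t⌉₊ := flowDelta_le_dynDelta Φ hsub s hN
        _ ≤ dynDeltaSup φ Set.univ δ s := by
            rw [dynDeltaSup]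
            exact le_iSup₂ (f := fun (N : ℕ) (_ : 1 ≤ N) => dynDelta φ Set.univ δ s N) ⌈t⌉₊ hN
        _ = 0 := hzero
    exact hcrit.trans (le_iSup₂ (f := fun (r : ℝ) (_ : 0 < r) => critVal φ Set.univ r) δ hδ0)
  · -- weakComplexity ≤ flowWeakComplexity
    rw [flowWeakComplexity, weakComplexity]
    refine iSup₂_le fun ε hε => ?_
    have hcrit : critVal φ Set.univ ε ≤ flowCritVal Φ ε := by
      refine sInf_le_sInf ?_
      rintro c ⟨s, hs0, rfl, hzero⟩
      refine ⟨s, hs0, rfl, ?_⟩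
      rw [dynDeltaSup]
      refine le_antisymm (iSup₂_le fun N hN => ?_) (zero_le)
      have h2s0 : (2 : ℝ≥0∞) ^ s ≠ 0 := by
        simp [ENNReal.rpow_eq_zero_iff]
      have h2st : (2 : ℝ≥0∞) ^ s ≠ ⊤ := by
        simp [ENNReal.rpow_eq_top_iff]
      have hflow0 : flowDelta Φ ε s ((N : ℕ) : ℝ) = 0 := by
        refine le_antisymm ?_ (zero_le)
        rw [← hzero, flowDeltaSup]
        exact le_iSup₂ (f := fun (t : ℝ) (_ : 1 ≤ t) => flowDelta Φ ε s t)
          ((N : ℕ) : ℝ) (by exact_mod_cast hN)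
      refine ENNReal.le_of_forall_pos_le_add fun η hη _ => ?_
      rw [zero_add]
      set c : ℝ≥0∞ := (η : ℝ≥0∞) / (2 : ℝ≥0∞) ^ s with hcdef
      have hc0 : 0 < c := ENNReal.div_pos (by exact_mod_cast hη.ne') h2st
      have hlt : flowDelta Φ ε s ((N : ℕ) : ℝ) < c := by rw [hflow0]; exact hc0
      rw [flowDelta] at hlt
      obtain ⟨S, hS⟩ := iInf_lt_iff.mp hlt
      obtain ⟨hScov, hw⟩ := iInf_lt_iff.mp hS
      calc dynDelta φ Set.univ ε s N ≤ (2 : ℝ≥0∞) ^ s * flowCoverWeight s S :=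
            dynDelta_le_flowCoverWeight Φ hid hsemi ε hs0 hN hScov
        _ ≤ (2 : ℝ≥0∞) ^ s * c := mul_le_mul_right hw.le _
        _ = (η : ℝ≥0∞) := ENNReal.mul_div_cancel h2s0 h2st
    exact hcrit.trans (le_iSup₂ (f := fun (r : ℝ) (_ : 0 < r) => flowCritVal Φ r) ε hε)
end
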